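/- Let L ∈ ℝ^{m×n} and a ∈ ℝ^m, and set P = I − L L⁺. If P a ≠ 0, then the Moore–Penrose pseudoinverse of the augmented matrix (L, a) ∈ ℝ^{m×(n+1)} is the block matrix with top block L⁺ − L⁺ a bᵀ and bottom row bᵀ, where bᵀ = (P a)⁺ = (P a)ᵀ / ‖P a‖². -/

import Mathlib

open Matrix

/-- `Lp` is the Moore–Penrose pseudoinverse of `L` (the four Penrose conditions). -/
def IsMoorePenrose {m n : ℕ} (L : Matrix (Fin m) (Fin n) ℝ)
    (Lp : Matrix (Fin n) (Fin m) ℝ) : Prop :=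
  L * Lp * L = L ∧ Lp * L * Lp = Lp ∧ (L * Lp)ᵀ = L * Lp ∧ (Lp * L)ᵀ = Lp * L

/-- The matrix `(L, a)` obtained by appending the column `a` to `L`. -/
def appendCol {m n : ℕ} (L : Matrix (Fin m) (Fin n) ℝ) (a : Fin m → ℝ) :
    Matrix (Fin m) (Fin (n + 1)) ℝ :=
  Matrix.of fun i j => Fin.lastCases (a i) (fun j' => L i j') j

/-- if `P a ≠ 0` with `P = I - L L⁺`, the Moore–Penrose pseudoinverse of
`(L, a)` is the block matrix with top block `L⁺ - L⁺ a bᵀ` and bottom row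
`bᵀ = (P a)⁺ = (P a)ᵀ / ‖P a‖²`. -/
theorem stmt1 {m n : ℕ} (L : Matrix (Fin m) (Fin n) ℝ) (Lp : Matrix (Fin n) (Fin m) ℝ)
    (hLp : IsMoorePenrose L Lp) (a : Fin m → ℝ)
    (P : Matrix (Fin m) (Fin m) ℝ) (hP : P = 1 - L * Lp)
    (hPa : P *ᵥ a ≠ 0)
    (b : Fin m → ℝ) (hb : b = fun j => (P *ᵥ a) j / ((P *ᵥ a) ⬝ᵥ (P *ᵥ a)))
    (B : Matrix (Fin (n + 1)) (Fin m) ℝ)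
    (hB : B = Matrix.of fun i j =>
      Fin.lastCases (b j) (fun i' => Lp i' j - (Lp *ᵥ a) i' * b j) i) :
    IsMoorePenrose (appendCol L a) B := by
  obtain ⟨h1, h2, h3, h4⟩ := hLp
  have hPL : P * L = 0 := by rw [hP, Matrix.sub_mul, Matrix.one_mul, h1, sub_self]
  have hLpP : Lp * P = 0 := by rw [hP, Matrix.mul_sub, Matrix.mul_one, ← Matrix.mul_assoc, h2, sub_self]
  have hPT : Pᵀ = P := by rw [hP, transpose_sub, transpose_one, h3]
  have hXX : (L * Lp) * (L * Lp) = L * Lp := by rw [← Matrix.mul_assoc, h1]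
  have hPP : P * P = P := by
    rw [hP, Matrix.sub_mul, Matrix.one_mul, Matrix.mul_sub, Matrix.mul_one, hXX, sub_self, sub_zero]
  have hcL : (P *ᵥ a) ᵥ* L = 0 := by
    rw [← vecMul_transpose, vecMul_vecMul, hPT, hPL, vecMul_zero]
  have hLpc : Lp *ᵥ (P *ᵥ a) = 0 := by rw [mulVec_mulVec, hLpP, zero_mulVec]
  have hvP : (P *ᵥ a) ᵥ* P = P *ᵥ a := by
    conv_lhs => rw [← vecMul_transpose, vecMul_vecMul, hPT, hPP, ← hPT, vecMul_transpose]
  have hca : (P *ᵥ a) ⬝ᵥ a = (P *ᵥ a) ⬝ᵥ (P *ᵥ a) := by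
    rw [dotProduct_mulVec, hvP]
  have hκ : (P *ᵥ a) ⬝ᵥ (P *ᵥ a) ≠ 0 := fun h => hPa (dotProduct_self_eq_zero.mp h)
  have hbs : b = ((P *ᵥ a) ⬝ᵥ (P *ᵥ a))⁻¹ • (P *ᵥ a) := by
    funext j; simp [hb, div_eq_inv_mul]
  have hbL : b ᵥ* L = 0 := by rw [hbs, smul_vecMul, hcL, smul_zero]
  have hbLLp : b ᵥ* (L * Lp) = 0 := by rw [← vecMul_vecMul, hbL, zero_vecMul]
  have hba : b ⬝ᵥ a = 1 := by
    rw [hbs, smul_dotProduct, hca, smul_eq_mul, inv_mul_cancel₀ hκ]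
  have hbc : b ⬝ᵥ (P *ᵥ a) = 1 := by
    rw [hbs, smul_dotProduct, smul_eq_mul, inv_mul_cancel₀ hκ]
  -- pointwise versions
  have f1 : ∀ j, (∑ k, b k * L k j) = 0 := fun j => by
    simpa [vecMul, dotProduct] using congrFun hbL j
  have f2 : ∀ j, (∑ k, b k * (L * Lp) k j) = 0 := fun j => by
    simpa [vecMul, dotProduct] using congrFun hbLLp j
  have f3 : (∑ k, b k * a k) = 1 := hba
  have f4 : (∑ k, b k * (P *ᵥ a) k) = 1 := hbc
  have f5 : ∀ i, (∑ k, Lp i k * (P *ᵥ a) k) = 0 := fun i => by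
    simpa [mulVec, dotProduct] using congrFun hLpc i
  have f6 : ∀ i, (P *ᵥ a) i = a i - ∑ j, L i j * (Lp *ᵥ a) j := fun i => by
    have : (P *ᵥ a) i = a i - ((L * Lp) *ᵥ a) i := by
      rw [hP, Matrix.sub_mulVec, Matrix.one_mulVec]; rfl
    rw [this, ← mulVec_mulVec]
    simp [mulVec, dotProduct]
  have g1 : ∀ i, (∑ l, (L * Lp) i l * a l) = ∑ j', L i j' * (Lp *ᵥ a) j' := by
    intro i
    have : ((L * Lp) *ᵥ a) i = (L *ᵥ (Lp *ᵥ a)) i := by rw [mulVec_mulVec]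
    simpa [mulVec, dotProduct] using this
  have g2 : ∀ i j', (∑ l, (L * Lp) i l * L l j') = L i j' := by
    intro i j'
    have := congrFun (congrFun h1 i) j'
    simpa [Matrix.mul_apply] using this
  have g3 : ∀ i' k, (∑ j', (Lp * L) i' j' * Lp j' k) = Lp i' k := by
    intro i' k
    have := congrFun (congrFun h2 i') k
    simpa [Matrix.mul_apply] using this
  have g4 : ∀ i', (∑ j', (Lp * L) i' j' * (Lp *ᵥ a) j') = (Lp *ᵥ a) i' := by
    intro i'
    have : ((Lp * L) *ᵥ (Lp *ᵥ a)) i' = (Lp *ᵥ a) i' := by rw [mulVec_mulVec, h2]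
    simpa [mulVec, dotProduct] using this
  have g5 : ∀ i, (∑ l, Lp i l * a l) = (Lp *ᵥ a) i := by
    intro i; simp [mulVec, dotProduct]
  -- key product formulas
  have hMB : appendCol L a * B = L * Lp + Matrix.of (fun i k => (P *ᵥ a) i * b k) := by
    ext i k
    simp only [Matrix.mul_apply, Matrix.add_apply, Matrix.of_apply, appendCol, hB,
      Fin.sum_univ_castSucc, Fin.lastCases_castSucc, Fin.lastCases_last]
    have e : (∑ j, L i j * (Lp j k - (Lp *ᵥ a) j * b k))
        = (∑ j, L i j * Lp j k) - (∑ j, L i j * (Lp *ᵥ a) j) * b k := by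
      rw [Finset.sum_mul, ← Finset.sum_sub_distrib]
      exact Finset.sum_congr rfl fun _ _ => by ring
    rw [e, f6]
    ring
  have hBM : B * appendCol L a = Matrix.of (fun i j =>
      Fin.lastCases (Fin.lastCases (1:ℝ) (fun _ => 0) j)
        (fun i' => Fin.lastCases 0 (fun j' => (Lp * L) i' j') j) i) := by
    ext i j
    induction i using Fin.lastCases with
    | last =>
      induction j using Fin.lastCases with
      | last =>
        simp only [Matrix.mul_apply, Matrix.of_apply, appendCol, hB, Fin.lastCases_last]
        exact f3
      | cast j' =>
        simp only [Matrix.mul_apply, Matrix.of_apply, appendCol, hB, Fin.lastCases_last,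
          Fin.lastCases_castSucc]
        exact f1 j'
    | cast i' =>
      induction j using Fin.lastCases with
      | last =>
        simp only [Matrix.mul_apply, Matrix.of_apply, appendCol, hB, Fin.lastCases_last,
          Fin.lastCases_castSucc]
        have e : (∑ k, (Lp i' k - (Lp *ᵥ a) i' * b k) * a k)
            = (∑ k, Lp i' k * a k) - (Lp *ᵥ a) i' * (∑ k, b k * a k) := by
          rw [Finset.mul_sum, ← Finset.sum_sub_distrib]
          exact Finset.sum_congr rfl fun _ _ => by ring
        rw [e, f3, g5 i']
        ring
      | cast j' =>
        simp only [Matrix.mul_apply, Matrix.of_apply, appendCol, hB, Fin.lastCases_castSucc]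
        have e : (∑ k, (Lp i' k - (Lp *ᵥ a) i' * b k) * L k j')
            = (∑ k, Lp i' k * L k j') - (Lp *ᵥ a) i' * (∑ k, b k * L k j') := by
          rw [Finset.mul_sum, ← Finset.sum_sub_distrib]
          exact Finset.sum_congr rfl fun _ _ => by ring
        rw [e, f1 j']
        simp [Matrix.mul_apply]
  refine ⟨?_, ?_, ?_, ?_⟩
  · -- M * B * M = M
    rw [hMB]
    ext i j
    induction j using Fin.lastCases with
    | last =>
      rw [Matrix.mul_apply]
      simp only [Matrix.add_apply, Matrix.of_apply, appendCol, Fin.lastCases_last]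
      have e : (∑ l, ((L * Lp) i l + (P *ᵥ a) i * b l) * a l)
          = (∑ l, (L * Lp) i l * a l) + (P *ᵥ a) i * (∑ l, b l * a l) := by
        rw [Finset.mul_sum, ← Finset.sum_add_distrib]
        exact Finset.sum_congr rfl fun _ _ => by ring
      rw [e, f3, g1 i, f6 i]
      ring
    | cast j' =>
      rw [Matrix.mul_apply]
      simp only [Matrix.add_apply, Matrix.of_apply, appendCol, Fin.lastCases_castSucc]
      have e : (∑ l, ((L * Lp) i l + (P *ᵥ a) i * b l) * L l j')
          = (∑ l, (L * Lp) i l * L l j') + (P *ᵥ a) i * (∑ l, b l * L l j') := by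
        rw [Finset.mul_sum, ← Finset.sum_add_distrib]
        exact Finset.sum_congr rfl fun _ _ => by ring
      rw [e, f1 j', g2 i j']
      ring
  · -- B * M * B = B
    rw [hBM]
    ext i k
    induction i using Fin.lastCases with
    | last =>
      simp only [Matrix.mul_apply, Matrix.of_apply, hB, Fin.sum_univ_castSucc,
        Fin.lastCases_last, Fin.lastCases_castSucc]
      simp
    | cast i' =>
      rw [Matrix.mul_apply]
      simp only [Matrix.of_apply, hB, Fin.sum_univ_castSucc,
        Fin.lastCases_last, Fin.lastCases_castSucc]
      have e : (∑ j', (Lp * L) i' j' * (Lp j' k - (Lp *ᵥ a) j' * b k))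
          = (∑ j', (Lp * L) i' j' * Lp j' k) - (∑ j', (Lp * L) i' j' * (Lp *ᵥ a) j') * b k := by
        rw [Finset.sum_mul, ← Finset.sum_sub_distrib]
        exact Finset.sum_congr rfl fun _ _ => by ring
      rw [e, g3 i' k, g4 i']
      ring
  · -- (M * B)ᵀ = M * B
    rw [hMB]
    ext i k
    simp only [Matrix.transpose_apply, Matrix.add_apply, Matrix.of_apply]
    have := congrFun (congrFun h3 i) k
    simp only [Matrix.transpose_apply] at this
    rw [this]
    simp only [hb]
    ring
  · -- (B * M)ᵀ = B * M
    rw [hBM]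
    ext i j
    simp only [Matrix.transpose_apply, Matrix.of_apply]
    induction i using Fin.lastCases with
    | last =>
      induction j using Fin.lastCases with
      | last => simp
      | cast j' => simp
    | cast i' =>
      induction j using Fin.lastCases with
      | last => simp
      | cast j' =>
        simp only [Fin.lastCases_castSucc]
        have := congrFun (congrFun h4 i') j'
        simpa [Matrix.transpose_apply] using this
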